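/- The function f₁(p) = 27·(12p^2 + 7p + 1)/∏_{k=1}^6 (kp+1) is strictly decreasing on the interval (0, 1/3); moreover f₁(0) = 27 and f₁(1/3) = 243/160. -/
import Mathlib


/-- `f₁(p) = 27(12p^2+7p+1)/∏_{k=1}^6 (kp+1)`. -/
noncomputable def f₁ (p : ℝ) : ℝ :=
  27 * (12*p^2 + 7*p + 1) /
    ((p+1) * (2*p+1) * (3*p+1) * (4*p+1) * (5*p+1) * (6*p+1))

lemma f1_eq (p : ℝ) (hp : 0 < p) :
    f₁ p = 27 / ((p+1) * (2*p+1) * (5*p+1) * (6*p+1)) := by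
  have h3 : 3*p+1 ≠ 0 := by nlinarith
  have h4 : 4*p+1 ≠ 0 := by nlinarith
  unfold f₁
  field_simp
  ring

/-- `f₁` is strictly decreasing on `(0,1/3)`; moreover `f₁(0) = 27` and `f₁(1/3) = 243/160`. -/
theorem f1_strictAnti :
    StrictAntiOn f₁ (Set.Ioo (0:ℝ) (1/3)) ∧ f₁ 0 = 27 ∧ f₁ (1/3) = 243/160 := by
  refine ⟨?_, by norm_num [f₁], by norm_num [f₁]⟩
  intro x hx y hy hxy
  rw [f1_eq x hx.1, f1_eq y hy.1]
  have hx0 := hx.1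
  have hy0 := hy.1
  have hDx : 0 < (x+1) * (2*x+1) * (5*x+1) * (6*x+1) := by positivity
  have hDy : 0 < (y+1) * (2*y+1) * (5*y+1) * (6*y+1) := by positivity
  apply div_lt_div_of_pos_left (by norm_num) hDx
  have h2 : x^2 < y^2 := by nlinarith
  have h3 : x^3 < y^3 := by nlinarith
  have h4 : x^4 < y^4 := by nlinarith
  nlinarith [h2, h3, h4]
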